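/- Let n ≥ 1 and k ≥ 1 be natural numbers, and for each i with 0 ≤ i ≤ k let m_i be a natural number with gcd(m_i, n+i) = 1 and 0 < m_i < n+i. Then the rational number ∑_{i=0}^{k} m_i/(n+i) is not an integer. -/

import Mathlib

/-- Between two distinct naturals with the same 2-adic valuation there is a natural
with strictly larger 2-adic valuation. -/
lemma exists_between_of_padicValNat_eq {a b : ℕ} (ha : 0 < a) (hab : a < b)
    (hv : padicValNat 2 a = padicValNat 2 b) :
    ∃ c, a < c ∧ c ≤ b ∧ padicValNat 2 a < padicValNat 2 c := by
  set v := padicValNat 2 a with hvdef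
  have hda : (2 : ℕ) ^ v ∣ a := pow_padicValNat_dvd
  have hdb : (2 : ℕ) ^ v ∣ b := hv ▸ pow_padicValNat_dvd
  obtain ⟨s, hs⟩ := hda
  have hpow : 0 < (2:ℕ) ^ v := Nat.pow_pos (by norm_num)
  have hsodd : ¬ (2 ∣ s) := by
    intro ⟨t, ht⟩
    have : (2 : ℕ) ^ (v + 1) ∣ a := ⟨t, by rw [hs, ht]; ring⟩
    exact pow_succ_padicValNat_not_dvd (by omega) this
  have hceq : 2 ^ v * (s + 1) = a + 2 ^ v := by rw [hs]; ring
  refine ⟨2 ^ v * (s + 1), by omega, ?_, ?_⟩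
  · -- b ≥ a + 2^v since 2^v ∣ b - a
    have hd : (2 : ℕ) ^ v ∣ b - a := Nat.dvd_sub hdb ⟨s, hs⟩
    have : 2 ^ v ≤ b - a := Nat.le_of_dvd (by omega) hd
    omega
  · have hc : (2 : ℕ) ^ (v + 1) ∣ 2 ^ v * (s + 1) := by
      have : 2 ∣ s + 1 := by omega
      obtain ⟨t, ht⟩ := this
      exact ⟨t, by rw [ht]; ring⟩
    have hc0 : 2 ^ v * (s + 1) ≠ 0 := by positivity
    have := (padicValNat_dvd_iff_le (p := 2) hc0).mp hc
    omega

theorem sum_irreducible_fractions_consecutive_denominators_not_integer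
    (n k : ℕ) (hn : 1 ≤ n) (hk : 1 ≤ k) (m : ℕ → ℕ)
    (hcop : ∀ i ≤ k, Nat.gcd (m i) (n + i) = 1)
    (hpos : ∀ i ≤ k, 0 < m i)
    (hlt : ∀ i ≤ k, m i < n + i) :
    ¬ ∃ z : ℤ, ∑ i ∈ Finset.range (k + 1), (m i : ℚ) / (n + i) = (z : ℚ) := by
  rintro ⟨z, hz⟩
  have hn2 : 2 ≤ n := by
    have := hpos 0 (by omega); have := hlt 0 (by omega); omega
  set F : ℕ → ℚ := fun i => (m i : ℚ) / (n + i) with hF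
  have hFpos : ∀ i ≤ k, 0 < F i := fun i hi => by
    have h1 := hpos i hi
    simp only [hF]
    have h2 : (0:ℚ) < (n : ℚ) + (i : ℚ) := by positivity
    have h3 : (0:ℚ) < (m i : ℚ) := by exact_mod_cast h1
    positivity
  have hcast : ∀ i : ℕ, F i = (m i : ℚ) / ((n + i : ℕ) : ℚ) := by
    intro i; simp only [hF]; push_cast; ring
  have hval_ge : ∀ i ≤ k,
      -((padicValNat 2 (n + i) : ℤ)) ≤ padicValRat 2 (F i) := by
    intro i hi
    have hm0 : (m i : ℚ) ≠ 0 := by exact_mod_cast (hpos i hi).ne'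
    have hd0 : ((n + i : ℕ) : ℚ) ≠ 0 := by exact_mod_cast (by omega : n + i ≠ 0)
    rw [hcast i, padicValRat.div hm0 hd0, padicValRat.of_nat, padicValRat.of_nat]
    have : (0:ℤ) ≤ padicValNat 2 (m i) := Int.natCast_nonneg _
    omega
  have hval_eq : ∀ i ≤ k, 2 ∣ (n + i) →
      padicValRat 2 (F i) = -((padicValNat 2 (n + i) : ℤ)) := by
    intro i hi hdvd
    have hm0 : (m i : ℚ) ≠ 0 := by exact_mod_cast (hpos i hi).ne'
    have hd0 : ((n + i : ℕ) : ℚ) ≠ 0 := by exact_mod_cast (by omega : n + i ≠ 0)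
    have hmodd : ¬ (2 ∣ m i) := by
      intro h
      have : 2 ∣ Nat.gcd (m i) (n + i) := Nat.dvd_gcd h hdvd
      rw [hcop i hi] at this; omega
    rw [hcast i, padicValRat.div hm0 hd0, padicValRat.of_nat, padicValRat.of_nat,
      padicValNat.eq_zero_of_not_dvd hmodd]
    omega
  -- choose i0 maximizing padicValNat 2 (n + ·) on range (k+1)
  obtain ⟨i0, hi0mem, hi0max⟩ := Finset.exists_max_image (Finset.range (k + 1))
    (fun i => padicValNat 2 (n + i)) ⟨0, Finset.mem_range.mpr (by omega)⟩
  rw [Finset.mem_range] at hi0mem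
  have hi0k : i0 ≤ k := by omega
  have hvpos : 1 ≤ padicValNat 2 (n + i0) := by
    rcases Nat.even_or_odd n with he | ho
    · have h0 : 1 ≤ padicValNat 2 (n + 0) :=
        one_le_padicValNat_of_dvd (by omega) (by simpa using he.two_dvd)
      have := hi0max 0 (Finset.mem_range.mpr (by omega)); omega
    · obtain ⟨t, ht⟩ := ho
      have h1 : 2 ∣ n + 1 := by omega
      have h0 : 1 ≤ padicValNat 2 (n + 1) := one_le_padicValNat_of_dvd (by omega) h1
      have := hi0max 1 (Finset.mem_range.mpr (by omega)); omega
  have hdvd0 : 2 ∣ n + i0 := dvd_of_one_le_padicValNat hvpos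
  have hvi0 : padicValRat 2 (F i0) = -((padicValNat 2 (n + i0) : ℤ)) :=
    hval_eq i0 hi0k hdvd0
  -- uniqueness of the maximizer
  have huniq : ∀ i, i ≤ k → i ≠ i0 →
      padicValNat 2 (n + i) < padicValNat 2 (n + i0) := by
    intro i hi hne
    have hle := hi0max i (Finset.mem_range.mpr (by omega))
    rcases lt_or_eq_of_le hle with h | h
    · exact h
    · exfalso
      rcases Nat.lt_or_ge (n + i) (n + i0) with hab | hab
      · obtain ⟨c, hc1, hc2, hc3⟩ := exists_between_of_padicValNat_eq
          (a := n + i) (by omega) hab h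
        obtain ⟨j, hj, rfl⟩ : ∃ j, j ≤ k ∧ c = n + j := ⟨c - n, by omega, by omega⟩
        have := hi0max j (Finset.mem_range.mpr (by omega))
        omega
      · have hab' : n + i0 < n + i := by omega
        obtain ⟨c, hc1, hc2, hc3⟩ := exists_between_of_padicValNat_eq
          (a := n + i0) (by omega) hab' h.symm
        obtain ⟨j, hj, rfl⟩ : ∃ j, j ≤ k ∧ c = n + j := ⟨c - n, by omega, by omega⟩
        have := hi0max j (Finset.mem_range.mpr (by omega))
        omega
  have hS : (Finset.range (k + 1) \ {i0}).Nonempty := by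
    rcases Nat.eq_zero_or_pos i0 with h0 | h0
    · exact ⟨1, by simp [Finset.mem_sdiff, Finset.mem_range]; omega⟩
    · exact ⟨0, by simp [Finset.mem_sdiff, Finset.mem_range]; omega⟩
  set F' : ℕ → ℚ := fun i => if i ≤ k then F i else 1 with hF'
  have hF'pos : ∀ i, 0 < F' i := by
    intro i; simp only [hF']; split
    · exact hFpos i (by assumption)
    · norm_num
  have hF'i0 : F' i0 = F i0 := by simp only [hF', if_pos hi0k]
  have hkey : ∀ i ∈ Finset.range (k + 1) \ {i0},
      padicValRat 2 (F' i0) < padicValRat 2 (F' i) := by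
    intro i hi
    rw [Finset.mem_sdiff, Finset.mem_range, Finset.mem_singleton] at hi
    obtain ⟨hik, hne⟩ := hi
    have hik' : i ≤ k := by omega
    have h1 : padicValRat 2 (F' i0) = -((padicValNat 2 (n + i0) : ℤ)) := by
      rw [hF'i0]; exact hvi0
    have h2 : -((padicValNat 2 (n + i) : ℤ)) ≤ padicValRat 2 (F' i) := by
      simp only [hF', if_pos hik']; exact hval_ge i hik'
    have := huniq i hik' hne
    omega
  have hmain := padicValRat.lt_sum_of_lt (p := 2) (j := i0) hS hkey hF'pos
  have hsum_split : ∑ i ∈ Finset.range (k + 1), F' i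
      = F' i0 + ∑ i ∈ Finset.range (k + 1) \ {i0}, F' i := by
    rw [add_comm, Finset.sum_sdiff_eq_sub (by simp [Finset.mem_range]; omega),
      Finset.sum_singleton]
    ring
  have hsum_ne : ∑ i ∈ Finset.range (k + 1) \ {i0}, F' i ≠ 0 :=
    (Finset.sum_pos (fun i _ => hF'pos i) hS).ne'
  have hF'0 : F' i0 ≠ 0 := (hF'pos i0).ne'
  have hval_total : padicValRat 2 (∑ i ∈ Finset.range (k + 1), F' i)
      = -((padicValNat 2 (n + i0) : ℤ)) := by
    rw [hsum_split, padicValRat.add_eq_of_lt (p := 2) ?_ hF'0 hsum_ne hmain]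
    · rw [hF'i0]; exact hvi0
    · exact (add_pos (hF'pos i0)
        (Finset.sum_pos (fun i _ => hF'pos i) hS)).ne'
  have hsum_eq : ∑ i ∈ Finset.range (k + 1), F' i
      = ∑ i ∈ Finset.range (k + 1), (m i : ℚ) / (n + i) := by
    apply Finset.sum_congr rfl
    intro i hi
    rw [Finset.mem_range] at hi
    simp only [hF', if_pos (by omega : i ≤ k), hF]
  have hsumpos : (0:ℚ) < ∑ i ∈ Finset.range (k + 1), F' i := by
    rw [hsum_split]
    exact add_pos (hF'pos i0) (Finset.sum_pos (fun i _ => hF'pos i) hS)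
  rw [hsum_eq, hz] at hval_total hsumpos
  have hz0 : z ≠ 0 := by
    intro h; rw [h] at hsumpos; simp at hsumpos
  have hzval : 0 ≤ padicValRat 2 (z : ℚ) := by
    rw [padicValRat.of_int]
    exact Int.natCast_nonneg _
  omega
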